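/- Suppose v, Λ are such that for k = 1,2,3, |r ∂v_k(t,x) − ⃗ω Λ_k(r − c₁t, x/|x|)| ≤ C ε² ⟨t+r⟩^{−1+2δ} ⟨c₁t − r⟩^{−δ} for all (t,x) with x ≠ 0, where 0 < δ < 1/4, r = |x|, ⃗ω = (−c₁, x/|x|). Then ‖∂v_k(t,·) − ⃗ω r^{−1} Λ_k(r − c₁t, ·/|·|)‖²_{L²(ℝ³)} ≤ C ε⁴ ⟨t⟩^{−1+2δ}, and in particular this L² norm tends to 0 as t → ∞. -/

import Mathlib

open MeasureTheory Filter

noncomputable section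

abbrev E3 := EuclideanSpace ℝ (Fin 3)

/-- Time derivative `∂_t f`. -/
def pdt (f : ℝ × E3 → ℝ) (p : ℝ × E3) : ℝ :=
  fderiv ℝ f p ((1 : ℝ), (0 : E3))

/-- Spatial partial derivative `∂_i f`. -/
def pdx (i : Fin 3) (f : ℝ × E3 → ℝ) (p : ℝ × E3) : ℝ :=
  fderiv ℝ f p ((0 : ℝ), EuclideanSpace.single i 1)

/-- Space-time gradient `∂ f = (∂_t f, ∇f)` as a 4-vector. -/
def dfour (f : ℝ × E3 → ℝ) (p : ℝ × E3) : Fin 4 → ℝ :=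
  ![pdt f p, pdx 0 f p, pdx 1 f p, pdx 2 f p]

/-- Null covector `⃗ω = (-c₁, x/|x|)`. -/
def omega4 (c1 : ℝ) (x : E3) : Fin 4 → ℝ :=
  ![-c1, x 0 / ‖x‖, x 1 / ‖x‖, x 2 / ‖x‖]

/-- Euclidean norm of a space-time 4-vector. -/
def norm4 (a : Fin 4 → ℝ) : ℝ := Real.sqrt (∑ μ, (a μ) ^ 2)

/-- Japanese bracket `⟨s⟩ = (1+s²)^{1/2}`. -/
def jpn (s : ℝ) : ℝ := Real.sqrt (1 + s ^ 2)

open Set intervalIntegral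
open scoped ENNReal NNReal

/-! ### Auxiliary lemmas on the Japanese bracket -/

lemma jpn_pos (s : ℝ) : 0 < jpn s := Real.sqrt_pos.2 (by positivity)

lemma one_le_jpn (s : ℝ) : 1 ≤ jpn s := by
  have h := Real.sq_sqrt (show (0:ℝ) ≤ 1 + s^2 by positivity)
  have h2 := Real.sqrt_nonneg (1 + s^2)
  rw [jpn]; nlinarith

lemma jpn_neg (s : ℝ) : jpn (-s) = jpn s := by simp [jpn]

lemma jpn_mono {a b : ℝ} (ha : 0 ≤ a) (hab : a ≤ b) : jpn a ≤ jpn b :=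
  Real.sqrt_le_sqrt (by nlinarith)

lemma self_le_jpn (s : ℝ) : s ≤ jpn s := by
  have h := Real.sq_sqrt (show (0:ℝ) ≤ 1 + s^2 by positivity)
  have h2 := Real.sqrt_nonneg (1 + s^2)
  rw [jpn]; nlinarith

lemma jpn_le_one_add {t : ℝ} (ht : 0 ≤ t) : jpn t ≤ 1 + t := by
  have h : jpn t = Real.sqrt (1 + t^2) := rfl
  rw [h, show (1:ℝ)+t = Real.sqrt ((1+t)^2) by rw [Real.sqrt_sq (by linarith)]]
  exact Real.sqrt_le_sqrt (by nlinarith)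

lemma one_add_abs_le (s : ℝ) : 1 + |s| ≤ Real.sqrt 2 * jpn s := by
  rw [jpn, ← Real.sqrt_mul (by norm_num)]
  rw [show (1:ℝ)+|s| = Real.sqrt ((1+|s|)^2) by rw [Real.sqrt_sq (by positivity)]]
  apply Real.sqrt_le_sqrt
  have := abs_nonneg s
  have := sq_abs s
  nlinarith [sq_nonneg (|s|-1)]

lemma jpn_rpow_le {p : ℝ} (hp2 : -2 ≤ p) (hp0 : p ≤ 0) (s : ℝ) :
    jpn s ^ p ≤ 2 * (1 + |s|) ^ p := by
  have h1 : (1 + |s|) / Real.sqrt 2 ≤ jpn s := by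
    rw [div_le_iff₀ (by positivity)]
    calc 1 + |s| ≤ Real.sqrt 2 * jpn s := one_add_abs_le s
    _ = jpn s * Real.sqrt 2 := mul_comm _ _
  have h2 : (0:ℝ) < (1 + |s|) / Real.sqrt 2 := by positivity
  calc jpn s ^ p ≤ ((1 + |s|) / Real.sqrt 2) ^ p :=
        Real.rpow_le_rpow_of_nonpos h2 h1 hp0
    _ = (1 + |s|) ^ p / (Real.sqrt 2) ^ p := Real.div_rpow (by positivity) (Real.sqrt_nonneg 2) p
    _ = (1 + |s|) ^ p * ((Real.sqrt 2) ^ (-p)) := by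
        rw [div_eq_mul_inv, ← Real.rpow_neg (by positivity)]
    _ ≤ (1 + |s|) ^ p * 2 := by
        apply mul_le_mul_of_nonneg_left _ (by positivity)
        calc (Real.sqrt 2 : ℝ) ^ (-p) ≤ Real.sqrt 2 ^ (2:ℝ) := by
              apply Real.rpow_le_rpow_of_exponent_le _ (by linarith)
              have := Real.sq_sqrt (show (0:ℝ) ≤ 2 by norm_num)
              have := Real.sqrt_nonneg 2
              nlinarith
          _ = 2 := by
              rw [show (2:ℝ) = ((2:ℕ):ℝ) by norm_num, Real.rpow_natCast]
              exact Real.sq_sqrt (by norm_num)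
    _ = 2 * (1 + |s|) ^ p := mul_comm _ _

lemma lintegral_shift (g : ℝ → ℝ≥0∞) (hg : Measurable g) {S : Set ℝ} (hS : MeasurableSet S)
    (c : ℝ) : ∫⁻ r in ((fun x => x + c) ⁻¹' S), g (r + c) = ∫⁻ s in S, g s := by
  conv_rhs => rw [← map_add_right_eq_self volume c]
  rw [setLIntegral_map hS hg (measurable_add_const c)]

lemma jpn_measurable : Measurable jpn := by
  have : Continuous jpn := by
    apply Real.continuous_sqrt.comp
    continuity
  exact this.measurable

/-! ### Polar-coordinates formula for lower integrals on `E3` -/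

lemma lintegral_norm_E3 (g : ℝ → ℝ≥0∞) (hg : Measurable g) :
    ∫⁻ x : E3, g ‖x‖ = (volume : Measure E3).toSphere Set.univ *
      ∫⁻ y in Set.Ioi (0 : ℝ), ENNReal.ofReal (y ^ (2 : ℕ)) * g y := by
  have hdim : Module.finrank ℝ E3 - 1 = 2 := by
    rw [finrank_euclideanSpace_fin]
  have step1 : ∫⁻ x : E3, g ‖x‖
      = ∫⁻ x : ({0}ᶜ : Set E3), g ‖x.1‖ ∂((volume : Measure E3).comap (↑)) := by
    rw [lintegral_subtype_comap (measurableSet_singleton (0:E3)).compl (fun x => g ‖x‖),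
      MeasureTheory.restrict_compl_singleton]
  have step2 : ∫⁻ x : ({0}ᶜ : Set E3), g ‖x.1‖ ∂((volume : Measure E3).comap (↑))
      = ∫⁻ p : Metric.sphere (0 : E3) 1 × Ioi (0 : ℝ), g p.2
          ∂((volume : Measure E3).toSphere.prod
            (.volumeIoiPow (Module.finrank ℝ E3 - 1))) := by
    have e := (volume : Measure E3).measurePreserving_homeomorphUnitSphereProd.lintegral_comp_emb
      (Homeomorph.measurableEmbedding _)
      (fun p : Metric.sphere (0 : E3) 1 × Ioi (0 : ℝ) => g p.2)
    rw [← e]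
    exact lintegral_congr (fun a => by simp)
  have hgm : Measurable fun p : Metric.sphere (0 : E3) 1 × Ioi (0 : ℝ) => g p.2 :=
    hg.comp (measurable_subtype_coe.comp measurable_snd)
  have step3 : ∫⁻ p : Metric.sphere (0 : E3) 1 × Ioi (0 : ℝ), g p.2
          ∂((volume : Measure E3).toSphere.prod
            (.volumeIoiPow (Module.finrank ℝ E3 - 1)))
      = (volume : Measure E3).toSphere Set.univ *
          ∫⁻ y : Ioi (0:ℝ), g y ∂(Measure.volumeIoiPow (Module.finrank ℝ E3 - 1)) := by
    rw [lintegral_prod _ hgm.aemeasurable]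
    simp [lintegral_const, mul_comm]
  have step4 : ∫⁻ y : Ioi (0:ℝ), g y ∂(Measure.volumeIoiPow (Module.finrank ℝ E3 - 1))
      = ∫⁻ y in Set.Ioi (0:ℝ), ENNReal.ofReal (y ^ (2:ℕ)) * g y := by
    rw [Measure.volumeIoiPow, hdim]
    rw [lintegral_withDensity_eq_lintegral_mul _
      ((measurable_subtype_coe.pow_const 2).ennreal_ofReal)
      (show Measurable fun y : Ioi (0:ℝ) => g y.1 from hg.comp measurable_subtype_coe)]
    exact lintegral_subtype_comap measurableSet_Ioi
      (fun y => ENNReal.ofReal (y ^ (2:ℕ)) * g y)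
  rw [step1, step2, step3, step4]

/-! ### The key radial integral estimate -/

set_option maxHeartbeats 1000000 in
lemma radial_bound {c1 δ : ℝ} (hc1 : 0 < c1) (hδ0 : 0 < δ) (hδ : δ < 1/4) :
    ∃ K : ℝ, 0 < K ∧ ∀ t : ℝ, 0 ≤ t →
      ∫⁻ r in Ioi (0:ℝ), ENNReal.ofReal
          (jpn (t + r) ^ (2*(-1+2*δ)) * jpn (c1*t - r) ^ (-(2*δ)))
        ≤ ENNReal.ofReal (K * jpn t ^ (-1+2*δ)) := by
  set a : ℝ := 2*(-1+2*δ) with ha_def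
  set b : ℝ := -(2*δ) with hb_def
  set q : ℝ := a + b with hq_def
  have ha0 : a ≤ 0 := by rw [ha_def]; nlinarith
  have ha2 : -2 ≤ a := by rw [ha_def]; nlinarith
  have hb0 : b ≤ 0 := by rw [hb_def]; nlinarith
  have hb1 : -1 < b := by rw [hb_def]; nlinarith
  have hb2 : -2 ≤ b := by linarith
  have hq1 : q < -1 := by rw [hq_def, ha_def, hb_def]; nlinarith
  have hq2 : -2 ≤ q := by rw [hq_def, ha_def, hb_def]; nlinarith
  have hq0 : q ≤ 0 := by linarith
  have hbp : 0 < b + 1 := by linarith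
  have hsum : a + (b + 1) = -1 + 2*δ := by rw [ha_def, hb_def]; ring
  have hqp : q + 1 = -1 + 2*δ := by rw [hq_def, ha_def, hb_def]; ring
  refine ⟨8*(1+c1)/(b+1) + 2/(b+1), by positivity, fun t ht => ?_⟩
  set R : ℝ := (1+c1)*t with hR_def
  have hR0 : (0:ℝ) ≤ R := by positivity
  have hjt := jpn_pos t
  have hjt1 := one_le_jpn t
  -- measurable bound functions
  have hGm : Measurable fun s : ℝ => ENNReal.ofReal (2 * jpn t ^ a * (1+|s|)^b) := by
    apply ENNReal.measurable_ofReal.comp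
    apply Measurable.const_mul
    exact (measurable_const.add measurable_abs).pow measurable_const
  have hG2m : Measurable fun s : ℝ => ENNReal.ofReal (2 * (1+|s|)^q) := by
    apply ENNReal.measurable_ofReal.comp
    apply Measurable.const_mul
    exact (measurable_const.add measurable_abs).pow measurable_const
  have key : ∫⁻ r in Ioi (0:ℝ), ENNReal.ofReal (jpn (t + r) ^ a * jpn (c1*t - r) ^ b)
      = (∫⁻ r in Ioc (0:ℝ) R, ENNReal.ofReal (jpn (t + r) ^ a * jpn (c1*t - r) ^ b))
      + ∫⁻ r in Ioi R, ENNReal.ofReal (jpn (t + r) ^ a * jpn (c1*t - r) ^ b) := by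
    rw [← Ioc_union_Ioi_eq_Ioi hR0, lintegral_union measurableSet_Ioi (Ioc_disjoint_Ioi le_rfl)]
  have hcontb : Continuous fun s : ℝ => (1+|s|)^b :=
    (continuous_const.add continuous_abs).rpow_const (fun x => Or.inl (by positivity : (1:ℝ)+|x| ≠ 0))
  have hcontq : Continuous fun s : ℝ => (1+|s|)^q :=
    (continuous_const.add continuous_abs).rpow_const (fun x => Or.inl (by positivity : (1:ℝ)+|x| ≠ 0))
  -- Region A
  have hA : (∫⁻ r in Ioc (0:ℝ) R, ENNReal.ofReal (jpn (t + r) ^ a * jpn (c1*t - r) ^ b))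
      ≤ ENNReal.ofReal ((8*(1+c1)/(b+1)) * jpn t ^ (-1+2*δ)) := by
    have step1 : ∀ r ∈ Ioc (0:ℝ) R, ENNReal.ofReal (jpn (t + r) ^ a * jpn (c1*t - r) ^ b)
        ≤ (fun s => ENNReal.ofReal (2 * jpn t ^ a * (1+|s|)^b)) (r + -(c1*t)) := by
      intro r hr
      apply ENNReal.ofReal_le_ofReal
      have h1 : jpn (t+r) ^ a ≤ jpn t ^ a :=
        Real.rpow_le_rpow_of_nonpos (jpn_pos t) (jpn_mono ht (by linarith [hr.1.le])) ha0
      have h2 : jpn (c1*t - r) ^ b ≤ 2 * (1 + |r + -(c1*t)|) ^ b := by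
        have hrw : c1*t - r = -(r + -(c1*t)) := by ring
        rw [hrw, jpn_neg]
        exact jpn_rpow_le hb2 hb0 _
      calc jpn (t+r)^a * jpn (c1*t - r)^b ≤ jpn t ^ a * (2 * (1+|r + -(c1*t)|)^b) := by
            apply mul_le_mul h1 h2 (Real.rpow_nonneg (jpn_pos _).le _)
              (Real.rpow_nonneg (jpn_pos _).le _)
        _ = (fun s => 2 * jpn t ^ a * (1+|s|)^b) (r + -(c1*t)) := by ring
    calc (∫⁻ r in Ioc (0:ℝ) R, ENNReal.ofReal (jpn (t + r) ^ a * jpn (c1*t - r) ^ b))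
        ≤ ∫⁻ r in Ioc (0:ℝ) R,
            (fun s => ENNReal.ofReal (2 * jpn t ^ a * (1+|s|)^b)) (r + -(c1*t)) :=
          setLIntegral_mono (hGm.comp (measurable_add_const _)) step1
      _ = ∫⁻ s in Ioc (-(c1*t)) t, ENNReal.ofReal (2 * jpn t ^ a * (1+|s|)^b) := by
          have hpre : Ioc (0:ℝ) R = (fun x => x + -(c1*t)) ⁻¹' (Ioc (-(c1*t)) t) := by
            ext x
            simp only [mem_Ioc, mem_preimage, hR_def]
            constructor <;> intro h <;> constructor <;> linarith [h.1, h.2]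
          rw [hpre]
          exact lintegral_shift _ hGm measurableSet_Ioc _
      _ ≤ ∫⁻ s in Ioc (-R) R, ENNReal.ofReal (2 * jpn t ^ a * (1+|s|)^b) := by
          apply lintegral_mono_set
          apply Ioc_subset_Ioc
          · rw [hR_def]; nlinarith
          · rw [hR_def]; nlinarith
      _ = ENNReal.ofReal (∫ s in Ioc (-R) R, 2 * jpn t ^ a * (1+|s|)^b) := by
          rw [ofReal_integral_eq_lintegral_ofReal]
          · exact ((continuous_const.mul hcontb).integrableOn_Ioc)
          · filter_upwards with s
            positivity
      _ ≤ ENNReal.ofReal ((8*(1+c1)/(b+1)) * jpn t ^ (-1+2*δ)) := by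
          apply ENNReal.ofReal_le_ofReal
          have e1 : ∫ s in Ioc (-R) R, 2 * jpn t ^ a * (1+|s|)^b
              = ∫ s in (-R)..R, 2 * jpn t ^ a * (1+|s|)^b :=
            (intervalIntegral.integral_of_le (by linarith)).symm
          rw [e1, intervalIntegral.integral_const_mul]
          have esplit : ∫ s in (-R)..R, (1+|s|)^b
              = (∫ s in (-R)..(0:ℝ), (1+|s|)^b) + ∫ s in (0:ℝ)..R, (1+|s|)^b :=
            (intervalIntegral.integral_add_adjacent_intervals
              (hcontb.intervalIntegrable _ _) (hcontb.intervalIntegrable _ _)).symm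
          have eneg : ∫ s in (-R)..(0:ℝ), (1+|s|)^b = ∫ s in (0:ℝ)..R, (1+|s|)^b := by
            have h := intervalIntegral.integral_comp_neg (a := (0:ℝ)) (b := R)
              (fun s => (1+|s|)^b)
            simp only [abs_neg, neg_zero] at h
            rw [← h]
          have eabs : ∫ s in (0:ℝ)..R, (1+|s|)^b = ∫ s in (0:ℝ)..R, (1+s)^b := by
            apply intervalIntegral.integral_congr
            intro x hx
            rw [uIcc_of_le hR0] at hx
            show (1+|x|)^b = (1+x)^b
            rw [abs_of_nonneg hx.1]
          have eval : ∫ s in (0:ℝ)..R, (1+s)^b = ((1+R)^(b+1) - 1)/(b+1) := by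
            have h := intervalIntegral.integral_comp_add_right (a := (0:ℝ)) (b := R)
              (fun u => u^b) 1
            calc ∫ s in (0:ℝ)..R, (1+s)^b = ∫ s in (0:ℝ)..R, (s+1)^b := by
                  congr 1; funext s; rw [add_comm]
              _ = ∫ u in (0+1:ℝ)..(R+1), u^b := h
              _ = ((R+1)^(b+1) - (0+1:ℝ)^(b+1))/(b+1) := by
                  rw [integral_rpow (Or.inl hb1)]
              _ = ((1+R)^(b+1) - 1)/(b+1) := by
                  rw [show ((0:ℝ)+1) = 1 by norm_num, Real.one_rpow, add_comm R 1]
          rw [esplit, eneg, eabs, eval]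
          have hbase : 1+R ≤ 2*(1+c1)*jpn t := by
            have h1 := self_le_jpn t
            rw [hR_def]; nlinarith
          have h1 : (1+R)^(b+1) ≤ (2*(1+c1))^(b+1) * jpn t ^(b+1) := by
            rw [← Real.mul_rpow (by positivity) hjt.le]
            exact Real.rpow_le_rpow (by positivity) hbase hbp.le
          have h2 : (2*(1+c1):ℝ)^(b+1) ≤ 2*(1+c1) := by
            nth_rewrite 2 [← Real.rpow_one (2*(1+c1))]
            apply Real.rpow_le_rpow_of_exponent_le (by linarith) (by linarith)
          have h3 : jpn t ^ a * jpn t ^(b+1) = jpn t ^ (-1+2*δ) := by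
            rw [← Real.rpow_add hjt, hsum]
          have hja : (0:ℝ) ≤ jpn t ^ a := Real.rpow_nonneg hjt.le _
          have hjb : (0:ℝ) ≤ jpn t ^ (b+1) := Real.rpow_nonneg hjt.le _
          calc 2 * jpn t ^ a * (((1+R)^(b+1) - 1)/(b+1) + ((1+R)^(b+1) - 1)/(b+1))
              ≤ 2 * jpn t ^ a * ((2*(1+c1)*jpn t^(b+1))/(b+1) + (2*(1+c1)*jpn t^(b+1))/(b+1)) := by
                apply mul_le_mul_of_nonneg_left _ (by positivity)
                have hnum : (1+R)^(b+1) - 1 ≤ 2*(1+c1)*jpn t^(b+1) := by nlinarith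
                apply add_le_add <;> exact (div_le_div_iff_of_pos_right hbp).2 hnum
            _ = (8*(1+c1)/(b+1)) * (jpn t ^ a * jpn t ^ (b+1)) := by
                field_simp
                ring
            _ = (8*(1+c1)/(b+1)) * jpn t ^ (-1+2*δ) := by rw [h3]
  -- Region B
  have hum : Measurable fun u : ℝ => ENNReal.ofReal (2*u^q) :=
    ((measurable_id.pow measurable_const).const_mul 2).ennreal_ofReal
  have hqb : q + 1 = -(b+1) := by rw [hq_def, ha_def, hb_def]; ring
  have hq10 : q + 1 ≤ 0 := by rw [hqp]; linarith
  have hB : (∫⁻ r in Ioi R, ENNReal.ofReal (jpn (t + r) ^ a * jpn (c1*t - r) ^ b))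
      ≤ ENNReal.ofReal ((2/(b+1)) * jpn t ^ (-1+2*δ)) := by
    have step1 : ∀ r ∈ Ioi R, ENNReal.ofReal (jpn (t + r) ^ a * jpn (c1*t - r) ^ b)
        ≤ (fun s => ENNReal.ofReal (2 * (1+|s|)^q)) (r + -(c1*t)) := by
      intro r hr
      apply ENNReal.ofReal_le_ofReal
      rw [mem_Ioi, hR_def] at hr
      have h0 : 0 ≤ r + -(c1*t) := by nlinarith [mul_nonneg hc1.le ht]
      have hrw : c1*t - r = -(r + -(c1*t)) := by ring
      have h1 : jpn (t+r) ^ a ≤ jpn (r + -(c1*t)) ^ a :=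
        Real.rpow_le_rpow_of_nonpos (jpn_pos _) (jpn_mono h0 (by linarith)) ha0
      calc jpn (t+r)^a * jpn (c1*t - r)^b
          ≤ jpn (r + -(c1*t)) ^ a * jpn (c1*t - r)^b := by
            apply mul_le_mul_of_nonneg_right h1 (Real.rpow_nonneg (jpn_pos _).le _)
        _ = jpn (r + -(c1*t)) ^ q := by
            rw [hrw, jpn_neg, ← Real.rpow_add (jpn_pos _), hq_def]
        _ ≤ 2 * (1 + |r + -(c1*t)|) ^ q := jpn_rpow_le hq2 hq0 _
    calc (∫⁻ r in Ioi R, ENNReal.ofReal (jpn (t + r) ^ a * jpn (c1*t - r) ^ b))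
        ≤ ∫⁻ r in Ioi R, (fun s => ENNReal.ofReal (2 * (1+|s|)^q)) (r + -(c1*t)) :=
          setLIntegral_mono (hG2m.comp (measurable_add_const _)) step1
      _ = ∫⁻ s in Ioi t, ENNReal.ofReal (2 * (1+|s|)^q) := by
          have hpre : Ioi R = (fun x => x + -(c1*t)) ⁻¹' (Ioi t) := by
            ext x
            simp only [mem_Ioi, mem_preimage, hR_def]
            constructor <;> intro h <;> linarith
          rw [hpre]
          exact lintegral_shift _ hG2m measurableSet_Ioi _
      _ = ∫⁻ s in Ioi t, (fun u => ENNReal.ofReal (2*u^q)) (s + 1) := by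
          apply setLIntegral_congr_fun measurableSet_Ioi
          intro s hs
          have hs0 : 0 ≤ s := le_trans ht hs.le
          show ENNReal.ofReal (2 * (1+|s|)^q) = ENNReal.ofReal (2*(s+1)^q)
          rw [abs_of_nonneg hs0, add_comm]
      _ = ∫⁻ u in Ioi (t+1), ENNReal.ofReal (2*u^q) := by
          have hpre2 : Ioi t = (fun x => x + 1) ⁻¹' (Ioi (t+1)) := by
            ext x
            simp only [mem_Ioi, mem_preimage]
            constructor <;> intro h <;> linarith
          rw [hpre2]
          exact lintegral_shift _ hum measurableSet_Ioi 1
      _ = ENNReal.ofReal (∫ u in Ioi (t+1), 2*u^q) := by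
          rw [ofReal_integral_eq_lintegral_ofReal]
          · exact (integrableOn_Ioi_rpow_of_lt hq1 (by linarith)).const_mul 2
          · filter_upwards [ae_restrict_mem measurableSet_Ioi] with u hu
            have hu0 : (0:ℝ) < u := lt_of_le_of_lt (by linarith) hu
            positivity
      _ ≤ ENNReal.ofReal ((2/(b+1)) * jpn t ^ (-1+2*δ)) := by
          apply ENNReal.ofReal_le_ofReal
          rw [MeasureTheory.integral_const_mul, integral_Ioi_rpow_of_lt hq1 (by linarith)]
          have h1 : (t+1)^(q+1) ≤ jpn t^(q+1) :=
            Real.rpow_le_rpow_of_nonpos hjt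
              (by rw [add_comm]; exact jpn_le_one_add ht) hq10
          have hjq : (0:ℝ) ≤ jpn t ^ (q+1) := Real.rpow_nonneg hjt.le _
          have e2 : 2 * (-(t+1)^(q+1)/(q+1)) = 2 * (t+1)^(q+1)/(b+1) := by
            rw [hqb, neg_div_neg_eq, mul_div_assoc]
          rw [e2, ← hqp]
          rw [div_mul_eq_mul_div, mul_comm (2:ℝ) ((jpn t)^(q+1))]
          exact (div_le_div_iff_of_pos_right hbp).2 (by nlinarith)
  calc ∫⁻ r in Ioi (0:ℝ), ENNReal.ofReal (jpn (t + r) ^ a * jpn (c1*t - r) ^ b)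
      = _ := key
    _ ≤ ENNReal.ofReal ((8*(1+c1)/(b+1)) * jpn t ^ (-1+2*δ))
        + ENNReal.ofReal ((2/(b+1)) * jpn t ^ (-1+2*δ)) := add_le_add hA hB
    _ = ENNReal.ofReal ((8*(1+c1)/(b+1)) * jpn t ^ (-1+2*δ)
          + (2/(b+1)) * jpn t ^ (-1+2*δ)) := by
        rw [ENNReal.ofReal_add]
        · positivity
        · positivity
    _ = ENNReal.ofReal ((8*(1+c1)/(b+1) + 2/(b+1)) * jpn t ^ (-1+2*δ)) := by
        ring_nf

/-! ### norm4 lemmas -/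

lemma norm4_nonneg (a : Fin 4 → ℝ) : 0 ≤ norm4 a := Real.sqrt_nonneg _

lemma norm4_const_mul (c : ℝ) (a : Fin 4 → ℝ) :
    norm4 (fun μ => c * a μ) = |c| * norm4 a := by
  rw [norm4, norm4, show ∑ μ, (c * a μ)^2 = c^2 * ∑ μ, (a μ)^2 by
    rw [Finset.mul_sum]; congr 1; funext μ; ring]
  rw [Real.sqrt_mul (sq_nonneg c), Real.sqrt_sq_eq_abs]

/-- If `|r ∂v_k - ⃗ω Λ_k(r-c₁t, x/|x|)| ≤ Cε²⟨t+r⟩^{-1+2δ}⟨c₁t-r⟩^{-δ}`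
pointwise, then `‖∂v_k(t) - ⃗ω r⁻¹Λ_k(r-c₁t,·/|·|)‖²_{L²} ≤ C'ε⁴⟨t⟩^{-1+2δ}`,
which tends to `0` as `t → ∞`. -/
theorem radiation_field_L2_convergence
    (c1 C ε δ : ℝ) (hc1 : 0 < c1) (hC : 0 < C) (hε : 0 < ε)
    (hδ0 : 0 < δ) (hδ : δ < 1 / 4)
    (v : Fin 3 → ℝ × E3 → ℝ) (Λ : Fin 3 → ℝ → E3 → ℝ)
    (hpt : ∀ (k : Fin 3) (t : ℝ) (x : E3), 0 ≤ t → x ≠ 0 →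
      norm4 (fun μ => ‖x‖ * dfour (v k) (t, x) μ
          - omega4 c1 x μ * Λ k (‖x‖ - c1 * t) (‖x‖⁻¹ • x))
        ≤ C * ε ^ 2 * jpn (t + ‖x‖) ^ (-1 + 2 * δ) * jpn (c1 * t - ‖x‖) ^ (-δ)) :
    ∃ C' : ℝ, 0 < C' ∧
      (∀ (k : Fin 3) (t : ℝ), 0 ≤ t →
        (∫⁻ x : E3, ENNReal.ofReal
            ((norm4 (fun μ => dfour (v k) (t, x) μ
              - omega4 c1 x μ * ‖x‖⁻¹ * Λ k (‖x‖ - c1 * t) (‖x‖⁻¹ • x))) ^ 2))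
          ≤ ENNReal.ofReal (C' * ε ^ 4 * jpn t ^ (-1 + 2 * δ))) ∧
      ∀ k : Fin 3, Tendsto (fun t : ℝ =>
          ∫⁻ x : E3, ENNReal.ofReal
            ((norm4 (fun μ => dfour (v k) (t, x) μ
              - omega4 c1 x μ * ‖x‖⁻¹ * Λ k (‖x‖ - c1 * t) (‖x‖⁻¹ • x))) ^ 2))
        atTop (nhds 0) := by
  obtain ⟨K, hK, hrad⟩ := radial_bound hc1 hδ0 hδ
  set S : ℝ≥0∞ := (volume : Measure E3).toSphere Set.univ with hS_def
  have hSfin : S ≠ ⊤ := measure_ne_top _ _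
  set C' : ℝ := (S.toReal + 1) * (C^2 * K) with hC'_def
  have hStr : 0 ≤ S.toReal := ENNReal.toReal_nonneg
  have hC'pos : 0 < C' := by positivity
  have main : ∀ (k : Fin 3) (t : ℝ), 0 ≤ t →
      (∫⁻ x : E3, ENNReal.ofReal
          ((norm4 (fun μ => dfour (v k) (t, x) μ
            - omega4 c1 x μ * ‖x‖⁻¹ * Λ k (‖x‖ - c1 * t) (‖x‖⁻¹ • x))) ^ 2))
        ≤ ENNReal.ofReal (C' * ε ^ 4 * jpn t ^ (-1 + 2 * δ)) := by
    intro k t ht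
    set K0 : ℝ := C * ε^2 with hK0_def
    have hK0 : 0 < K0 := by positivity
    set W : ℝ → ℝ := fun r => jpn (t + r) ^ (2*(-1+2*δ)) * jpn (c1*t - r) ^ (-(2*δ))
      with hW_def
    have hWnn : ∀ r, 0 ≤ W r := fun r =>
      mul_nonneg (Real.rpow_nonneg (jpn_pos _).le _) (Real.rpow_nonneg (jpn_pos _).le _)
    set G : ℝ → ℝ≥0∞ := fun r => ENNReal.ofReal ((r^2)⁻¹ * (K0^2 * W r)) with hG_def
    have hWm : Measurable W := by
      apply Measurable.mul
      · exact (jpn_measurable.comp (measurable_const.add measurable_id)).pow measurable_const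
      · exact (jpn_measurable.comp (measurable_const.sub measurable_id)).pow measurable_const
    have hGm : Measurable G := by
      apply ENNReal.measurable_ofReal.comp
      exact ((measurable_id.pow_const 2).inv).mul (hWm.const_mul _)
    have hae : ∀ᵐ x : E3, ENNReal.ofReal
        ((norm4 (fun μ => dfour (v k) (t, x) μ
          - omega4 c1 x μ * ‖x‖⁻¹ * Λ k (‖x‖ - c1 * t) (‖x‖⁻¹ • x))) ^ 2) ≤ G ‖x‖ := by
      have h0 : ∀ᵐ x : E3, x ≠ 0 := by
        rw [ae_iff]
        have : {x : E3 | ¬ x ≠ 0} = {0} := by ext x; simp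
        rw [this]
        exact measure_singleton 0
      filter_upwards [h0] with x hx
      apply ENNReal.ofReal_le_ofReal
      have hxpos : (0:ℝ) < ‖x‖ := norm_pos_iff.2 hx
      have hxn : ‖x‖ ≠ 0 := hxpos.ne'
      set A : Fin 4 → ℝ := dfour (v k) (t, x) with hA_def
      set ω : Fin 4 → ℝ := omega4 c1 x with hω_def
      set L : ℝ := Λ k (‖x‖ - c1 * t) (‖x‖⁻¹ • x) with hL_def
      have heq : (fun μ => A μ - ω μ * ‖x‖⁻¹ * L)
          = fun μ => ‖x‖⁻¹ * (‖x‖ * A μ - ω μ * L) := by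
        funext μ
        field_simp
      have hbound := hpt k t x ht hx
      have hfle : norm4 (fun μ => A μ - ω μ * ‖x‖⁻¹ * L)
          ≤ ‖x‖⁻¹ * (K0 * jpn (t + ‖x‖) ^ (-1+2*δ) * jpn (c1*t - ‖x‖) ^ (-δ)) := by
        rw [heq, norm4_const_mul, abs_of_nonneg (inv_nonneg.2 hxpos.le)]
        apply mul_le_mul_of_nonneg_left _ (inv_nonneg.2 hxpos.le)
        exact hbound
      have hfnn := norm4_nonneg (fun μ => A μ - ω μ * ‖x‖⁻¹ * L)
      have hMnn : 0 ≤ ‖x‖⁻¹ * (K0 * jpn (t + ‖x‖) ^ (-1+2*δ) * jpn (c1*t - ‖x‖) ^ (-δ)) := by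
        have := Real.rpow_nonneg (jpn_pos (t + ‖x‖)).le (-1+2*δ)
        have := Real.rpow_nonneg (jpn_pos (c1*t - ‖x‖)).le (-δ)
        positivity
      calc (norm4 (fun μ => A μ - ω μ * ‖x‖⁻¹ * L))^2
          ≤ (‖x‖⁻¹ * (K0 * jpn (t + ‖x‖) ^ (-1+2*δ) * jpn (c1*t - ‖x‖) ^ (-δ)))^2 := by
            apply pow_le_pow_left₀ hfnn hfle
        _ = (‖x‖^2)⁻¹ * (K0^2 *
              ((jpn (t + ‖x‖) ^ (-1+2*δ) * jpn (t + ‖x‖) ^ (-1+2*δ))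
                * (jpn (c1*t - ‖x‖) ^ (-δ) * jpn (c1*t - ‖x‖) ^ (-δ)))) := by
            generalize jpn (t + ‖x‖) ^ (-1+2*δ) = u
            generalize jpn (c1*t - ‖x‖) ^ (-δ) = w
            ring
        _ = (‖x‖^2)⁻¹ * (K0^2 * W ‖x‖) := by
            rw [hW_def, ← Real.rpow_add (jpn_pos _), ← Real.rpow_add (jpn_pos _)]
            rw [show (-1+2*δ)+(-1+2*δ) = 2*(-1+2*δ) by ring, show (-δ)+(-δ) = -(2*δ) by ring]
    calc (∫⁻ x : E3, ENNReal.ofReal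
          ((norm4 (fun μ => dfour (v k) (t, x) μ
            - omega4 c1 x μ * ‖x‖⁻¹ * Λ k (‖x‖ - c1 * t) (‖x‖⁻¹ • x))) ^ 2))
        ≤ ∫⁻ x : E3, G ‖x‖ := lintegral_mono_ae hae
      _ = S * ∫⁻ y in Set.Ioi (0:ℝ), ENNReal.ofReal (y ^ (2:ℕ)) * G y :=
          lintegral_norm_E3 G hGm
      _ = S * ∫⁻ y in Set.Ioi (0:ℝ), ENNReal.ofReal (K0^2) * ENNReal.ofReal (W y) := by
          congr 1
          apply setLIntegral_congr_fun measurableSet_Ioi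
          intro y hy
          rw [hG_def]
          beta_reduce
          rw [← ENNReal.ofReal_mul (by positivity), ← ENNReal.ofReal_mul (by positivity)]
          congr 1
          have hy0 : y ≠ 0 := ne_of_gt hy
          field_simp
      _ = S * (ENNReal.ofReal (K0^2) * ∫⁻ y in Set.Ioi (0:ℝ), ENNReal.ofReal (W y)) := by
          rw [lintegral_const_mul' _ _ ENNReal.ofReal_ne_top]
      _ ≤ S * (ENNReal.ofReal (K0^2) * ENNReal.ofReal (K * jpn t ^ (-1+2*δ))) := by
          apply mul_le_mul_right
          apply mul_le_mul_right
          exact hrad t ht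
      _ ≤ ENNReal.ofReal (C' * ε ^ 4 * jpn t ^ (-1 + 2 * δ)) := by
          rw [← ENNReal.ofReal_toReal hSfin,
            ← ENNReal.ofReal_mul (by positivity), ← ENNReal.ofReal_mul hStr]
          apply ENNReal.ofReal_le_ofReal
          have hjp : 0 ≤ jpn t ^ (-1+2*δ) := Real.rpow_nonneg (jpn_pos t).le _
          have hextra : 0 ≤ C^2 * K * ε^4 * jpn t ^ (-1+2*δ) := by positivity
          calc S.toReal * (K0^2 * (K * jpn t ^ (-1+2*δ)))
              = S.toReal * (C^2 * K) * ε^4 * jpn t ^ (-1+2*δ) := by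
                rw [hK0_def]; ring
            _ ≤ (S.toReal + 1) * (C^2 * K) * ε^4 * jpn t ^ (-1+2*δ) := by
                have : 0 ≤ (C^2 * K) * ε^4 * jpn t ^ (-1+2*δ) := by positivity
                nlinarith
            _ = C' * ε ^ 4 * jpn t ^ (-1 + 2*δ) := by rw [hC'_def]
  refine ⟨C', hC'pos, main, fun k => ?_⟩
  have hreal : Tendsto (fun t : ℝ => C' * ε^4 * jpn t ^ (-1 + 2*δ)) atTop (nhds 0) := by
    have h1 : Tendsto jpn atTop atTop := tendsto_atTop_mono self_le_jpn tendsto_id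
    have h2 : Tendsto (fun x : ℝ => x ^ (-(1 - 2*δ))) atTop (nhds 0) :=
      tendsto_rpow_neg_atTop (by linarith)
    have h3 : Tendsto (fun t : ℝ => jpn t ^ (-1 + 2*δ)) atTop (nhds 0) := by
      have := h2.comp h1
      simpa [Function.comp_def, show -(1 - 2*δ) = -1 + 2*δ by ring] using this
    have := h3.const_mul (C' * ε^4)
    simpa using this
  apply tendsto_of_tendsto_of_tendsto_of_le_of_le' tendsto_const_nhds
    ((ENNReal.tendsto_ofReal hreal).congr' (by filter_upwards with t; rfl) |>.mono_right
      (by rw [ENNReal.ofReal_zero]))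
  · exact Eventually.of_forall (fun _ => zero_le)
  · exact (eventually_ge_atTop 0).mono (fun t ht => main k t ht)

end
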